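/- The group U_2 of unitriangular automorphisms of A_2 = K⟨x,y⟩ is not linear: for every field F and every natural number m there is no injective group homomorphism from U_2 into GL_m(F). -/

import Mathlib

set_option linter.unusedSectionVars false
set_option linter.unnecessarySimpa false
set_option maxHeartbeats 1000000


/- STATEMENT 10: the group U₂ of unitriangular automorphisms of A₂ = K⟨x,y⟩ is not
   linear: for every field F and m ∈ ℕ there is no injective group homomorphism
   U₂ → GL_m(F). -/

noncomputable section
open FreeAlgebra

abbrev A2 (K : Type) [Field K] := FreeAlgebra K (Fin 2)

private lemma adjoin_stable {K : Type} [Field K]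
    (φ : A2 K ≃ₐ[K] A2 K) (b : K)
    (hy : φ (ι K 1) = ι K 1 + algebraMap K (A2 K) b) :
    ∀ u ∈ Algebra.adjoin K ({ι K 1} : Set (A2 K)),
      φ u ∈ Algebra.adjoin K ({ι K 1} : Set (A2 K)) := by
  intro u hu
  induction hu using Algebra.adjoin_induction with
  | mem v hv =>
      rcases hv with rfl
      rw [hy]
      exact add_mem (Algebra.self_mem_adjoin_singleton K _) (Subalgebra.algebraMap_mem _ _)
  | algebraMap r => rw [AlgEquiv.commutes]; exact Subalgebra.algebraMap_mem _ _
  | add u v _ _ hu hv => rw [map_add]; exact add_mem hu hv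
  | mul u v _ _ hu hv => rw [map_mul]; exact mul_mem hu hv

/-- The group `U₂` of unitriangular automorphisms of the free associative algebra
`A₂ = K⟨x,y⟩` (with `x = ι K 0`, `y = ι K 1`): automorphisms sending
`x ↦ x + f(y)`, `y ↦ y + b·1` with `f ∈ K⟨y⟩`, `b ∈ K`. -/
def U2 (K : Type) [Field K] : Subgroup (A2 K ≃ₐ[K] A2 K) where
  carrier := {φ | ∃ f ∈ Algebra.adjoin K ({ι K 1} : Set (A2 K)), ∃ b : K,
    φ (ι K 0) = ι K 0 + f ∧ φ (ι K 1) = ι K 1 + algebraMap K (A2 K) b}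
  one_mem' := ⟨0, Subalgebra.zero_mem _, 0, by simp, by simp⟩
  mul_mem' := by
    rintro φ ψ ⟨f, hf, b, hfx, hfy⟩ ⟨h, hh, c, hhx, hhy⟩
    refine ⟨f + φ h, add_mem hf (adjoin_stable φ b hfy h hh), b + c, ?_, ?_⟩
    · show φ (ψ (ι K 0)) = _
      rw [hhx, map_add, hfx, add_assoc]
    · show φ (ψ (ι K 1)) = _
      rw [hhy, map_add, hfy, AlgEquiv.commutes, map_add, add_assoc]
  inv_mem' := by
    rintro φ ⟨f, hf, b, hfx, hfy⟩
    have hsy : φ.symm (ι K 1) = ι K 1 + algebraMap K (A2 K) (-b) := by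
      have h1 := congrArg φ.symm hfy
      rw [AlgEquiv.symm_apply_apply, map_add, AlgEquiv.commutes] at h1
      rw [eq_sub_of_add_eq h1.symm, map_neg, sub_eq_add_neg]
    have hsx : φ.symm (ι K 0) = ι K 0 + (-(φ.symm f)) := by
      have h1 := congrArg φ.symm hfx
      rw [AlgEquiv.symm_apply_apply, map_add] at h1
      rw [eq_sub_of_add_eq h1.symm, sub_eq_add_neg]
    exact ⟨-(φ.symm f), neg_mem (adjoin_stable φ.symm (-b) hsy f hf), -b, hsx, hsy⟩

namespace U2NL
open Polynomial

variable {K : Type} [Field K] [CharZero K]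

/-! ### Polynomial lemmas -/

def dlt (b : K) : Polynomial K →ₗ[K] Polynomial K where
  toFun f := f.comp (X + C b) - f
  map_add' f g := by simp only [add_comp]; ring
  map_smul' c f := by simp only [smul_comp, RingHom.id_apply, smul_sub]

lemma dlt_apply (b : K) (f : Polynomial K) : dlt b f = f.comp (X + C b) - f := rfl

lemma dlt_X_pow_succ (b : K) (n : ℕ) :
    dlt b (X ^ (n+1)) = ∑ k ∈ Finset.range (n+1),
      C (((n+1).choose k : K) * b ^ (n+1-k)) * X ^ k := by
  rw [dlt_apply, X_pow_comp, add_pow]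
  rw [Finset.sum_range_succ]
  simp only [Nat.choose_self, Nat.cast_one, Nat.sub_self, pow_zero, mul_one, C_1]
  rw [add_sub_cancel_right]
  apply Finset.sum_congr rfl
  intro k hk
  simp only [map_mul, map_pow, C_eq_natCast]
  ring

lemma X_pow_mem_range_dlt (b : K) (hb : b ≠ 0) (n : ℕ) :
    (X : Polynomial K) ^ n ∈ LinearMap.range (dlt b) := by
  induction n using Nat.strong_induction_on with
  | _ n ih =>
    have h := dlt_X_pow_succ b n
    rw [Finset.sum_range_succ] at h
    have hc : (((n+1).choose n : K) * b ^ (n+1-n)) ≠ 0 := by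
      apply mul_ne_zero
      · exact_mod_cast Nat.cast_ne_zero.mpr (Nat.choose_pos (Nat.le_succ n)).ne'
      · exact pow_ne_zero _ hb
    have hmem : C (((n+1).choose n : K) * b ^ (n+1-n)) * X ^ n ∈ LinearMap.range (dlt b) := by
      have h1 : dlt b (X ^ (n+1)) - (∑ k ∈ Finset.range n,
          C (((n+1).choose k : K) * b ^ (n+1-k)) * X ^ k)
          = C (((n+1).choose n : K) * b ^ (n+1-n)) * X ^ n := by
        rw [h]; ring
      rw [← h1]
      apply sub_mem (LinearMap.mem_range_self _ _)
      apply Submodule.sum_mem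
      intro k hk
      rw [C_mul' _ _]
      exact Submodule.smul_mem _ _ (ih k (Finset.mem_range.mp hk))
    have := Submodule.smul_mem (LinearMap.range (dlt b))
      ((((n+1).choose n : K) * b ^ (n+1-n))⁻¹) hmem
    rwa [C_mul', smul_smul, inv_mul_cancel₀ hc, one_smul] at this

lemma dlt_surjective (b : K) (hb : b ≠ 0) : Function.Surjective (dlt b) := by
  intro g
  rw [← LinearMap.mem_range]
  induction g using Polynomial.induction_on' with
  | add p q hp hq => exact add_mem hp hq
  | monomial n a =>
      rw [← smul_X_eq_monomial]
      exact Submodule.smul_mem _ _ (X_pow_mem_range_dlt b hb n)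

lemma exists_dlt_pow_eq_zero (f : Polynomial K) :
    ∃ n, ((dlt (1:K)) ^ n) f = 0 := by
  let P : Submodule K (Polynomial K) :=
    { carrier := {f | ∃ n, ((dlt (1:K)) ^ n) f = 0}
      add_mem' := by
        rintro p q ⟨np, hp⟩ ⟨nq, hq⟩
        refine ⟨np + nq, ?_⟩
        have h1 : ((dlt (1:K)) ^ (np + nq)) p = 0 := by
          rw [add_comm, pow_add, Module.End.mul_apply, hp, map_zero]
        have h2 : ((dlt (1:K)) ^ (np + nq)) q = 0 := by
          rw [pow_add, Module.End.mul_apply, hq, map_zero]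
        rw [map_add, h1, h2, add_zero]
      zero_mem' := ⟨0, by simp⟩
      smul_mem' := by
        rintro c p ⟨n, hp⟩
        exact ⟨n, by rw [map_smul, hp, smul_zero]⟩ }
  have hX : ∀ n : ℕ, ((X : Polynomial K) ^ n) ∈ P := by
    intro n
    induction n using Nat.strong_induction_on with
    | _ n ih =>
      match n with
      | 0 => exact ⟨1, by simp [pow_one, dlt_apply]⟩
      | n + 1 =>
        have hsum : dlt (1:K) (X ^ (n+1)) ∈ P := by
          rw [dlt_X_pow_succ]
          apply Submodule.sum_mem
          intro k hk
          rw [C_mul']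
          exact Submodule.smul_mem _ _ (ih k (Finset.mem_range.mp hk))
        obtain ⟨nn, hnn⟩ := hsum
        exact ⟨nn + 1, by rw [pow_succ, Module.End.mul_apply, hnn]⟩
  have : f ∈ P := by
    induction f using Polynomial.induction_on' with
    | add p q hp hq => exact add_mem hp hq
    | monomial n a => rw [← smul_X_eq_monomial]; exact Submodule.smul_mem _ _ (hX n)
  exact this

lemma dlt_pow_surjective (b : K) (hb : b ≠ 0) (n : ℕ) :
    Function.Surjective ((dlt b) ^ n) := by
  induction n with
  | zero => simpa [Module.End.one_eq_id] using Function.surjective_id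
  | succ n ih =>
      rw [pow_succ]
      intro g
      obtain ⟨h, hh⟩ := ih g
      obtain ⟨p, hp⟩ := dlt_surjective b hb h
      exact ⟨p, by rw [Module.End.mul_apply, hp, hh]⟩

/-! ### Automorphisms of the free algebra -/

def tEnd (f : Polynomial K) : A2 K →ₐ[K] A2 K :=
  FreeAlgebra.lift K ![ι K 0 + aeval (ι K 1) f, ι K 1]

@[simp] lemma tEnd_x (f : Polynomial K) : tEnd f (ι K 0) = ι K 0 + aeval (ι K 1) f := by
  rw [tEnd, lift_ι_apply]; rfl

@[simp] lemma tEnd_y (f : Polynomial K) : tEnd f (ι K 1) = ι K 1 := by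
  rw [tEnd, lift_ι_apply]; rfl

lemma tEnd_comp (f g : Polynomial K) : (tEnd f).comp (tEnd g) = tEnd (f + g) := by
  apply FreeAlgebra.hom_ext
  funext i
  match i with
  | 0 =>
      simp only [Function.comp_apply, AlgHom.coe_comp, tEnd_x, map_add]
      rw [← Polynomial.aeval_algHom_apply, tEnd_y, add_assoc]
  | 1 => simp [Function.comp_apply]

lemma tEnd_zero : tEnd (0 : Polynomial K) = AlgHom.id K (A2 K) := by
  apply FreeAlgebra.hom_ext
  funext i
  match i with
  | 0 => simp
  | 1 => simp

def aEnd (b : K) : A2 K →ₐ[K] A2 K :=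
  FreeAlgebra.lift K ![ι K 0, ι K 1 + algebraMap K (A2 K) b]

@[simp] lemma aEnd_x (b : K) : aEnd b (ι K 0) = ι K 0 := by
  rw [aEnd, lift_ι_apply]; rfl

@[simp] lemma aEnd_y (b : K) : aEnd b (ι K 1) = ι K 1 + algebraMap K (A2 K) b := by
  rw [aEnd, lift_ι_apply]; rfl

lemma aEnd_comp (b c : K) : (aEnd b).comp (aEnd c) = aEnd (b + c) := by
  apply FreeAlgebra.hom_ext
  funext i
  match i with
  | 0 => simp
  | 1 =>
      simp only [Function.comp_apply, AlgHom.coe_comp, aEnd_y, map_add, AlgHom.commutes]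
      rw [add_assoc]

lemma aEnd_zero : aEnd (0 : K) = AlgHom.id K (A2 K) := by
  apply FreeAlgebra.hom_ext
  funext i
  match i with
  | 0 => simp
  | 1 => simp

def tA (f : Polynomial K) : A2 K ≃ₐ[K] A2 K :=
  AlgEquiv.ofAlgHom (tEnd f) (tEnd (-f))
    (by rw [tEnd_comp, add_neg_cancel, tEnd_zero])
    (by rw [tEnd_comp, neg_add_cancel, tEnd_zero])

@[simp] lemma tA_apply (f : Polynomial K) (z : A2 K) : tA f z = tEnd f z := rfl

def aA (b : K) : A2 K ≃ₐ[K] A2 K :=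
  AlgEquiv.ofAlgHom (aEnd b) (aEnd (-b))
    (by rw [aEnd_comp, add_neg_cancel, aEnd_zero])
    (by rw [aEnd_comp, neg_add_cancel, aEnd_zero])

@[simp] lemma aA_apply (b : K) (z : A2 K) : aA b z = aEnd b z := rfl

lemma tA_mul (f g : Polynomial K) : tA f * tA g = tA (f + g) := by
  apply AlgEquiv.ext
  intro z
  rw [AlgEquiv.mul_apply, tA_apply, tA_apply, tA_apply, ← AlgHom.comp_apply, tEnd_comp]

lemma tA_zero : tA (0 : Polynomial K) = 1 := by
  apply AlgEquiv.ext
  intro z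
  rw [tA_apply, tEnd_zero]; rfl

lemma aA_mul (b c : K) : aA b * aA c = aA (b + c) := by
  apply AlgEquiv.ext
  intro z
  rw [AlgEquiv.mul_apply, aA_apply, aA_apply, aA_apply, ← AlgHom.comp_apply, aEnd_comp]

lemma aA_zero : aA (0 : K) = 1 := by
  apply AlgEquiv.ext
  intro z
  rw [aA_apply, aEnd_zero]; rfl

lemma aA_inv (b : K) : (aA b)⁻¹ = aA (-b) := by
  apply inv_eq_of_mul_eq_one_right
  rw [aA_mul, add_neg_cancel, aA_zero]

lemma conj_tEnd (b : K) (f : Polynomial K) :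
    (aEnd b).comp ((tEnd f).comp (aEnd (-b))) = tEnd (f.comp (X + C b)) := by
  apply FreeAlgebra.hom_ext
  funext i
  match i with
  | 0 =>
      simp only [Function.comp_apply, AlgHom.coe_comp, aEnd_x, tEnd_x, map_add, aEnd_x]
      congr 1
      rw [← Polynomial.aeval_algHom_apply, aEnd_y, Polynomial.aeval_comp]
      congr 1
      rw [map_add, Polynomial.aeval_X, Polynomial.aeval_C]
  | 1 =>
      simp only [Function.comp_apply, AlgHom.coe_comp, aEnd_y, tEnd_y, map_add, AlgHom.commutes,
        map_neg]
      rw [add_assoc, add_neg_cancel, add_zero]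

lemma conj_tA (b : K) (f : Polynomial K) :
    aA b * tA f * (aA b)⁻¹ = tA (f.comp (X + C b)) := by
  rw [aA_inv]
  apply AlgEquiv.ext
  intro z
  rw [AlgEquiv.mul_apply, AlgEquiv.mul_apply, tA_apply, aA_apply, aA_apply, tA_apply,
    ← conj_tEnd b f]
  rfl

/-! ### Elements of `U2` -/

def tU (f : Polynomial K) : ↥(U2 K) :=
  ⟨tA f, aeval (ι K 1) f, Polynomial.aeval_mem_adjoin_singleton K _, 0,
    by simp, by simp⟩

def aU (b : K) : ↥(U2 K) :=
  ⟨aA b, 0, Subalgebra.zero_mem _, b, by simp, by simp⟩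

lemma tU_mul (f g : Polynomial K) : tU f * tU g = tU (f + g) :=
  Subtype.ext (tA_mul f g)

lemma tU_zero : tU (0 : Polynomial K) = 1 :=
  Subtype.ext tA_zero

lemma conj_tU (b : K) (f : Polynomial K) :
    aU b * tU f * (aU b)⁻¹ = tU (f.comp (X + C b)) :=
  Subtype.ext (conj_tA b f)

lemma aU_mul (b c : K) : aU b * aU c = aU (b + c) :=
  Subtype.ext (aA_mul b c)

lemma aU_zero : aU (0 : K) = 1 :=
  Subtype.ext aA_zero

lemma tU_one_ne_one : tU (1 : Polynomial K) ≠ 1 := by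
  intro h
  have h1 : tA (1 : Polynomial K) (ι K 0) = ι K 0 := by
    have := congrArg (fun u : ↥(U2 K) => (u : A2 K ≃ₐ[K] A2 K) (ι K 0)) h
    simpa [tU] using this
  rw [tA_apply, tEnd_x, map_one] at h1
  have : (1 : A2 K) = 0 := by
    have := congrArg (fun z => z - ι K 0) h1
    simpa using this
  exact one_ne_zero this

end U2NL

namespace U2NL
open Polynomial

section Matrices

variable {K : Type} [Field K] [CharZero K] {E : Type} [Field E] [IsAlgClosed E] {m : ℕ}

abbrev S (E : Type) [Field E] (m : ℕ) := Matrix (Fin m) (Fin m) E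

/-- Conjugation by a unit as an algebra automorphism of the matrix algebra. -/
def conjS (g : GL (Fin m) E) : S E m ≃ₐ[E] S E m where
  toFun x := ↑g * x * ↑g⁻¹
  invFun x := ↑g⁻¹ * x * ↑g
  left_inv x := by
    show ↑g⁻¹ * (↑g * x * ↑g⁻¹) * ↑g = x
    rw [← mul_assoc, ← mul_assoc, Units.inv_mul, one_mul, mul_assoc, Units.inv_mul, mul_one]
  right_inv x := by
    show ↑g * (↑g⁻¹ * x * ↑g) * ↑g⁻¹ = x
    rw [← mul_assoc, ← mul_assoc, Units.mul_inv, one_mul, mul_assoc, Units.mul_inv, mul_one]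
  map_mul' x y := by
    show ↑g * (x * y) * ↑g⁻¹ = (↑g * x * ↑g⁻¹) * (↑g * y * ↑g⁻¹)
    have h : (x * (y : S E m)) = x * (↑g⁻¹ * ↑g) * y := by rw [Units.inv_mul, mul_one]
    rw [h]
    noncomm_ring
  map_add' x y := by
    show ↑g * (x + y) * ↑g⁻¹ = ↑g * x * ↑g⁻¹ + ↑g * y * ↑g⁻¹
    rw [mul_add, add_mul]
  commutes' r := by
    show ↑g * (algebraMap E (S E m) r) * ↑g⁻¹ = algebraMap E (S E m) r
    rw [← Algebra.commutes r (↑g : S E m), mul_assoc, Units.mul_inv, mul_one]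

lemma conjS_apply (g : GL (Fin m) E) (x : S E m) : conjS g x = ↑g * x * ↑g⁻¹ := rfl

lemma conjS_conjS (g h : GL (Fin m) E) (x : S E m) :
    conjS g (conjS h x) = conjS (g * h) x := by
  simp only [conjS_apply, mul_inv_rev, Units.val_mul]
  noncomm_ring

lemma conjS_one (x : S E m) : conjS (1 : GL (Fin m) E) x = x := by
  simp [conjS_apply]

variable (ψ : ↥(U2 K) →* GL (Fin m) E)

def uS (f : Polynomial K) : S E m := ↑(ψ (tU f))

lemma uS_mul (f g : Polynomial K) : uS ψ f * uS ψ g = uS ψ (f + g) := by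
  rw [uS, uS, uS, ← Units.val_mul, ← map_mul, tU_mul]

lemma uS_zero : uS ψ 0 = 1 := by
  rw [uS, tU_zero, map_one, Units.val_one]

def gA (b : K) : GL (Fin m) E := ψ (aU b)

lemma gA_mul (b c : K) : gA ψ b * gA ψ c = gA ψ (b + c) := by
  rw [gA, gA, gA, ← map_mul, aU_mul]

lemma gA_zero : gA ψ 0 = 1 := by
  rw [gA, aU_zero, map_one]

lemma conj_uS (b : K) (f : Polynomial K) :
    conjS (gA ψ b) (uS ψ f) = uS ψ (f.comp (X + C b)) := by
  rw [conjS_apply, uS, uS, gA, ← map_inv, ← Units.val_mul, ← Units.val_mul, ← map_mul, ← map_mul,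
    conj_tU]

def RR : Subalgebra E (S E m) := Algebra.adjoin E (Set.range (uS ψ))

@[reducible] def commRingRR : CommRing ↥(RR ψ) :=
  { (RR ψ).toRing with
    mul_comm := (Algebra.adjoinCommRingOfComm E (fun a ha b hb => by
    obtain ⟨f, rfl⟩ := ha
    obtain ⟨g, rfl⟩ := hb
    rw [uS_mul, uS_mul, add_comm])).mul_comm }

attribute [local instance] commRingRR

def uR (f : Polynomial K) : ↥(RR ψ) := ⟨uS ψ f, Algebra.subset_adjoin ⟨f, rfl⟩⟩

lemma uR_mul (f g : Polynomial K) : uR ψ f * uR ψ g = uR ψ (f + g) :=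
  Subtype.ext (uS_mul ψ f g)

lemma uR_zero : uR ψ 0 = 1 :=
  Subtype.ext (uS_zero ψ)

lemma conjS_mem (b : K) : ∀ x ∈ RR ψ, conjS (gA ψ b) x ∈ RR ψ := by
  intro x hx
  induction hx using Algebra.adjoin_induction with
  | mem v hv =>
      obtain ⟨f, rfl⟩ := hv
      rw [conj_uS]
      exact Algebra.subset_adjoin ⟨_, rfl⟩
  | algebraMap r => rw [AlgEquiv.commutes]; exact Subalgebra.algebraMap_mem _ _
  | add u v _ _ hu hv => rw [map_add]; exact add_mem hu hv
  | mul u v _ _ hu hv => rw [map_mul]; exact mul_mem hu hv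

def tauR (b : K) : ↥(RR ψ) ≃ₐ[E] ↥(RR ψ) where
  toFun r := ⟨conjS (gA ψ b) ↑r, conjS_mem ψ b ↑r r.2⟩
  invFun r := ⟨conjS (gA ψ (-b)) ↑r, conjS_mem ψ (-b) ↑r r.2⟩
  left_inv r := Subtype.ext (by
    show conjS (gA ψ (-b)) (conjS (gA ψ b) ↑r) = (r : S E m)
    rw [conjS_conjS, gA_mul, neg_add_cancel, gA_zero, conjS_one])
  right_inv r := Subtype.ext (by
    show conjS (gA ψ b) (conjS (gA ψ (-b)) ↑r) = (r : S E m)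
    rw [conjS_conjS, gA_mul, add_neg_cancel, gA_zero, conjS_one])
  map_mul' r s := Subtype.ext (by
    show conjS (gA ψ b) ((r : S E m) * (s : S E m)) = _
    exact map_mul (conjS (gA ψ b)) _ _)
  map_add' r s := Subtype.ext (by
    show conjS (gA ψ b) ((r : S E m) + (s : S E m)) = _
    exact map_add (conjS (gA ψ b)) _ _)
  commutes' c := Subtype.ext (by
    show conjS (gA ψ b) ((algebraMap E ↥(RR ψ) c : ↥(RR ψ)) : S E m) = _
    rw [Subalgebra.coe_algebraMap]
    exact AlgEquiv.commutes _ _)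

lemma tauR_coe (b : K) (r : ↥(RR ψ)) :
    ((tauR ψ b r : ↥(RR ψ)) : S E m) = conjS (gA ψ b) ↑r := rfl

lemma tauR_uR (b : K) (f : Polynomial K) :
    tauR ψ b (uR ψ f) = uR ψ (f.comp (X + C b)) :=
  Subtype.ext (conj_uS ψ b f)

lemma tauR_tauR (b c : K) (r : ↥(RR ψ)) :
    tauR ψ b (tauR ψ c r) = tauR ψ (b + c) r :=
  Subtype.ext (by rw [tauR_coe, tauR_coe, tauR_coe, conjS_conjS, gA_mul])

end Matrices

end U2NL

namespace U2NL
open Polynomial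

section Key

variable {K : Type} [Field K] [CharZero K] {E : Type} [Field E] [IsAlgClosed E] {m : ℕ}
variable (ψ : ↥(U2 K) →* GL (Fin m) E)

attribute [local instance] commRingRR

set_option synthInstance.maxHeartbeats 1000000

def artRR : IsArtinianRing ↥(RR ψ) :=
  isArtinian_of_tower E (inferInstance : IsArtinian E ↥(RR ψ))

attribute [local instance] artRR

lemma tau_fix_sub_mem (P : Ideal ↥(RR ψ)) (hP : P.IsMaximal) (b : K)
    (hPb : ∀ r : ↥(RR ψ), r ∈ P ↔ tauR ψ b r ∈ P) (r : ↥(RR ψ)) :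
    tauR ψ b r - r ∈ P := by
  haveI := hP
  letI := Ideal.Quotient.field P
  haveI hfin : Module.Finite E (↥(RR ψ) ⧸ P) :=
    Module.Finite.of_surjective (Ideal.Quotient.mkₐ E P).toLinearMap
      (Ideal.Quotient.mkₐ_surjective E P)
  obtain ⟨c, hc⟩ := (IsAlgClosed.algebraMap_bijective_of_isIntegral (k := E)
    (K := ↥(RR ψ) ⧸ P)).2 (Ideal.Quotient.mk P r)
  have h1 : r - algebraMap E ↥(RR ψ) c ∈ P := by
    rw [← Ideal.Quotient.eq_zero_iff_mem, map_sub, Ideal.Quotient.mk_algebraMap, hc, sub_self]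
  have h2 : tauR ψ b (r - algebraMap E ↥(RR ψ) c) ∈ P := (hPb _).mp h1
  rw [map_sub, AlgEquiv.commutes] at h2
  have h3 := P.sub_mem h2 h1
  rwa [sub_sub_sub_cancel_right] at h3

lemma step1 (P : Ideal ↥(RR ψ)) (hP : P.IsMaximal) (f : Polynomial K) :
    uR ψ f - 1 ∈ P := by
  haveI := hP
  have hmax : ∀ k : ℕ, (Ideal.comap (tauR ψ (k : K)) P).IsMaximal := fun k =>
    Ideal.comap_isMaximal_of_surjective _ (EquivLike.surjective _)
  have core : ∀ j l : ℕ, j < l →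
      Ideal.comap (tauR ψ (j : K)) P = Ideal.comap (tauR ψ (l : K)) P →
      uR ψ f - 1 ∈ P := by
    intro j l hjl heq
    set D : K := ((l - j : ℕ) : K) with hD
    have hDne : D ≠ 0 := Nat.cast_ne_zero.mpr (Nat.sub_ne_zero_of_lt hjl)
    set P0 := Ideal.comap (tauR ψ (j : K)) P with hP0
    have hP0max : P0.IsMaximal := hmax j
    have e1 : ∀ r : ↥(RR ψ), tauR ψ (j : K) (tauR ψ D r) = tauR ψ ((l : ℕ) : K) r := by
      intro r
      have hx : (j : K) + D = ((l : ℕ) : K) := by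
        rw [hD, Nat.cast_sub hjl.le]; ring
      rw [tauR_tauR, hx]
    have hfixP0 : ∀ r : ↥(RR ψ), r ∈ P0 ↔ tauR ψ D r ∈ P0 := by
      intro r
      constructor
      · intro h
        show tauR ψ D r ∈ P0
        rw [hP0, Ideal.mem_comap, e1, ← Ideal.mem_comap, ← heq]
        exact h
      · intro h
        rw [hP0, Ideal.mem_comap, e1, ← Ideal.mem_comap, ← heq] at h
        exact h
    have hf0 : ∀ f : Polynomial K, uR ψ f - 1 ∈ P0 := by
      intro f
      obtain ⟨g, hg⟩ := dlt_surjective D hDne f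
      have hder := tau_fix_sub_mem ψ P0 hP0max D hfixP0 (uR ψ g)
      have hkey : uR ψ f - 1 = (tauR ψ D (uR ψ g) - uR ψ g) * uR ψ (-g) := by
        rw [tauR_uR, sub_mul, uR_mul, uR_mul, add_neg_cancel, uR_zero, ← sub_eq_add_neg,
          ← dlt_apply, hg]
      rw [hkey]
      exact Ideal.mul_mem_right _ _ hder
    have h2 := hf0 (f.comp (X + C (-(j : K))))
    rw [hP0, Ideal.mem_comap, map_sub, map_one, tauR_uR, Polynomial.comp_assoc] at h2
    have hX : (X + C (-(j : K))).comp (X + C (j : K)) = X := by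
      rw [add_comp, X_comp, C_comp, map_neg]
      ring
    rw [hX, comp_X] at h2
    exact h2
  have hfin := IsArtinianRing.setOfPred_isMaximal_finite ↥(RR ψ)
  obtain ⟨a, -, b, -, hab, heq⟩ := Set.infinite_univ.exists_ne_map_eq_of_mapsTo
    (f := fun k : ℕ => Ideal.comap (tauR ψ (k : K)) P)
    (fun k _ => hmax k) hfin
  rcases lt_or_gt_of_ne hab with h | h
  · exact core a b h heq
  · exact core b a h heq.symm

lemma step1' (f : Polynomial K) :
    uR ψ f - 1 ∈ Ideal.jacobson (⊥ : Ideal ↥(RR ψ)) := by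
  rw [Ideal.jacobson]
  apply Submodule.mem_sInf.mpr
  rintro I hI
  exact step1 ψ I hI.2 f

lemma tauJpow (b : K) (k : ℕ) :
    ∀ r ∈ (Ideal.jacobson (⊥ : Ideal ↥(RR ψ))) ^ k,
      tauR ψ b r ∈ (Ideal.jacobson (⊥ : Ideal ↥(RR ψ))) ^ k := by
  have hJ : ∀ r ∈ Ideal.jacobson (⊥ : Ideal ↥(RR ψ)),
      tauR ψ b r ∈ Ideal.jacobson (⊥ : Ideal ↥(RR ψ)) := by
    intro r hr
    rw [Ideal.jacobson] at hr ⊢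
    apply Submodule.mem_sInf.mpr
    rintro I hI
    haveI := hI.2
    have h1 : r ∈ Ideal.comap (tauR ψ b) I :=
      Submodule.mem_sInf.mp hr (Ideal.comap (tauR ψ b) I)
        ⟨bot_le, Ideal.comap_isMaximal_of_surjective _ (EquivLike.surjective _)⟩
    exact Ideal.mem_comap.mp h1
  induction k with
  | zero =>
      intro r _
      rw [pow_zero, Ideal.one_eq_top]
      exact Submodule.mem_top
  | succ k ih =>
      intro r hr
      rw [pow_succ] at hr ⊢
      refine Submodule.mul_induction_on hr (fun x hx y hy => ?_) (fun x y hx hy => ?_)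
      · rw [map_mul]
        exact Ideal.mul_mem_mul (ih x hx) (hJ y hy)
      · rw [map_add]
        exact add_mem hx hy

lemma main_ind (k : ℕ) :
    ∀ f : Polynomial K, uR ψ f - 1 ∈ (Ideal.jacobson (⊥ : Ideal ↥(RR ψ))) ^ (k + 1) := by
  induction k with
  | zero =>
      intro f
      rw [pow_one]
      exact step1' ψ f
  | succ k ih =>
      set J := Ideal.jacobson (⊥ : Ideal ↥(RR ψ)) with hJdef
      set p : Submodule E ↥(RR ψ) := Submodule.restrictScalars E (J ^ (k + 2)) with hpdef
      have hle : p ≤ p.comap (tauR ψ (1 : K)).toLinearMap := by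
        intro r hr
        exact tauJpow ψ 1 (k + 2) r hr
      set tbar : (↥(RR ψ) ⧸ p) →ₗ[E] (↥(RR ψ) ⧸ p) :=
        Submodule.mapQ p p (tauR ψ (1 : K)).toLinearMap hle with htbar
      set σ : (↥(RR ψ) ⧸ p) →ₗ[E] (↥(RR ψ) ⧸ p) := tbar - LinearMap.id with hσdef
      have hφ : ∀ f : Polynomial K,
          σ (p.mkQ (uR ψ f - 1)) = p.mkQ (uR ψ (dlt (1 : K) f) - 1) := by
        intro f
        have hστ : σ (p.mkQ (uR ψ f - 1))
            = p.mkQ (tauR ψ 1 (uR ψ f - 1) - (uR ψ f - 1)) := by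
          rw [hσdef, LinearMap.sub_apply, LinearMap.id_apply, htbar, Submodule.mkQ_apply,
            Submodule.mapQ_apply, map_sub p.mkQ (tauR ψ 1 (uR ψ f - 1)) (uR ψ f - 1),
            Submodule.mkQ_apply]
          rfl
        rw [hστ]
        rw [Submodule.mkQ_apply, Submodule.mkQ_apply]
        apply (Submodule.Quotient.eq p).mpr
        have hcong : (tauR ψ (1 : K) (uR ψ f - 1) - (uR ψ f - 1)) - (uR ψ (dlt (1 : K) f) - 1)
            = (uR ψ (dlt (1 : K) f) - 1) * (uR ψ f - 1) := by
          rw [map_sub, map_one, tauR_uR]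
          have h1 : f.comp (X + C (1 : K)) = dlt (1 : K) f + f := by
            rw [dlt_apply, sub_add_cancel]
          rw [h1, ← uR_mul]
          ring
        rw [hcong]
        show _ ∈ J ^ (k + 2)
        have hmm := Ideal.mul_mem_mul (ih (dlt (1 : K) f)) (ih f)
        rw [← pow_add] at hmm
        exact Ideal.pow_le_pow_right (by omega) hmm
      have hφpow : ∀ (n : ℕ) (f : Polynomial K),
          (σ ^ n) (p.mkQ (uR ψ f - 1)) = p.mkQ (uR ψ (((dlt (1 : K)) ^ n) f) - 1) := by
        intro n
        induction n with
        | zero => intro f; rw [pow_zero, pow_zero]; rfl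
        | succ n ihn =>
            intro f
            rw [pow_succ', Module.End.mul_apply, ihn, hφ, pow_succ', Module.End.mul_apply]
      have hmono : Monotone (fun n => LinearMap.ker (σ ^ n)) := by
        intro a b hab x hx
        simp only [LinearMap.mem_ker] at hx ⊢
        have hba : σ ^ b = σ ^ (b - a) * σ ^ a := by
          rw [← pow_add]; congr 1; omega
        rw [hba, Module.End.mul_apply, hx, map_zero]
      obtain ⟨n0, hn0⟩ := monotone_stabilizes_iff_noetherian.mpr
        (inferInstance : IsNoetherian E (↥(RR ψ) ⧸ p))
        ⟨fun n => LinearMap.ker (σ ^ n), hmono⟩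
      have hker : ∀ f : Polynomial K, (σ ^ n0) (p.mkQ (uR ψ f - 1)) = 0 := by
        intro f
        obtain ⟨nf, hnf⟩ := exists_dlt_pow_eq_zero f
        have h0 : (σ ^ nf) (p.mkQ (uR ψ f - 1)) = 0 := by
          rw [hφpow, hnf, uR_zero, sub_self, map_zero]
        have h1 : p.mkQ (uR ψ f - 1) ∈ LinearMap.ker (σ ^ (max n0 nf)) :=
          hmono (le_max_right n0 nf) (LinearMap.mem_ker.mpr h0)
        have h2 : LinearMap.ker (σ ^ n0) = LinearMap.ker (σ ^ (max n0 nf)) :=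
          hn0 (max n0 nf) (le_max_left n0 nf)
        have h3 : p.mkQ (uR ψ f - 1) ∈ LinearMap.ker (σ ^ n0) := by
          rw [h2]; exact h1
        exact LinearMap.mem_ker.mp h3
      intro f
      obtain ⟨g, hg⟩ := dlt_pow_surjective (1 : K) one_ne_zero n0 f
      have h4 := hker g
      rw [hφpow, hg] at h4
      have h5 : uR ψ f - 1 ∈ p := by
        rw [Submodule.mkQ_apply] at h4
        exact (Submodule.Quotient.mk_eq_zero p).mp h4
      exact h5

theorem key (hψ : Function.Injective ψ) : False := by
  obtain ⟨M, hM⟩ := IsArtinianRing.isNilpotent_jacobson_bot (R := ↥(RR ψ))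
  have h := main_ind ψ M (1 : Polynomial K)
  have hle : (Ideal.jacobson (⊥ : Ideal ↥(RR ψ))) ^ (M + 1)
      ≤ (Ideal.jacobson (⊥ : Ideal ↥(RR ψ))) ^ M :=
    Ideal.pow_le_pow_right (Nat.le_succ M)
  rw [hM] at hle
  have h0 : uR ψ (1 : Polynomial K) - 1 = 0 := by
    simpa using hle h
  have huR : uR ψ (1 : Polynomial K) = 1 := by rwa [sub_eq_zero] at h0
  have hS : uS ψ (1 : Polynomial K) = 1 := congrArg Subtype.val huR
  have hGL : ψ (tU (1 : Polynomial K)) = 1 := Units.ext hS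
  have h1 : tU (1 : Polynomial K) = (1 : ↥(U2 K)) := hψ (by rw [hGL, map_one])
  exact tU_one_ne_one h1

end Key
end U2NL


theorem U2_not_linear (K : Type) [Field K] [CharZero K] (F : Type) [Field F] (m : ℕ)
    (ρ : ↥(U2 K) →* Matrix.GeneralLinearGroup (Fin m) F) :
    ¬ Function.Injective ρ := by
  intro hinj
  have hmap : Function.Injective
      (Matrix.GeneralLinearGroup.map (n := Fin m) (algebraMap F (AlgebraicClosure F))) := by
    intro a b h
    apply Units.ext
    apply Matrix.ext
    intro i j
    have h1 := congrArg Units.val h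
    have h2 := congrArg (fun M : Matrix (Fin m) (Fin m) (AlgebraicClosure F) => M i j) h1
    simp only [Matrix.GeneralLinearGroup.map, Units.coe_map, MonoidHom.coe_coe,
      RingHom.mapMatrix_apply, Matrix.map_apply] at h2
    exact (algebraMap F (AlgebraicClosure F)).injective h2
  exact U2NL.key ((Matrix.GeneralLinearGroup.map (algebraMap F (AlgebraicClosure F))).comp ρ)
    (hmap.comp hinj)
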